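/- Suppose α₀ > α₁ ≥ 1, β₀ > β₁ ≥ 1 are integers with α₁β₀ − β₁α₀ = σ where σ = 1 or σ = −1. Then for every integer j with 0 ≤ j < β₁, the fractional part {α₀ j / β₀} equals {α₁ j / β₁} − σ j / (β₁ β₀). -/

import Mathlib

theorem stmt_5 (α₀ α₁ β₀ β₁ : ℕ) (hα₁ : 1 ≤ α₁) (hβ₁ : 1 ≤ β₁)
    (hα : α₁ < α₀) (hβ : β₁ < β₀) (σ : ℤ) (hσ : σ = 1 ∨ σ = -1)
    (h : (α₁ : ℤ) * β₀ - (β₁ : ℤ) * α₀ = σ)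
    (j : ℕ) (hj : j < β₁) :
    Int.fract ((α₀ * j : ℚ) / β₀) =
      Int.fract ((α₁ * j : ℚ) / β₁) - (σ : ℚ) * j / (β₁ * β₀) := by
  have hβ₁Q : (0:ℚ) < β₁ := by exact_mod_cast hβ₁
  have hβ₀Q : (0:ℚ) < β₀ := by
    have : 0 < β₀ := by omega
    exact_mod_cast this
  rcases Nat.eq_zero_or_pos j with hj0 | hjpos
  · subst hj0; simp
  have h' : (α₁:ℚ) * β₀ - (β₁:ℚ) * α₀ = σ := by exact_mod_cast h
  have hx : (α₀ * j : ℚ) / β₀ = (α₁ * j : ℚ) / β₁ - (σ:ℚ) * j / (β₁ * β₀) := by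
    field_simp
    ring_nf
    linear_combination (-1:ℚ) * h'
  rw [hx]
  set r : ℕ := (α₁ * j) % β₁ with hrdef
  have hfr : Int.fract ((α₁ * j : ℚ) / β₁) = (r : ℚ) / β₁ := by
    rw [show ((α₁ * j : ℚ)) = ((α₁ * j : ℕ) : ℚ) by push_cast; ring]
    exact Int.fract_div_natCast_eq_div_natCast_mod
  have hr2 : r < β₁ := Nat.mod_lt _ hβ₁
  have hr1 : 1 ≤ r := by
    rcases Nat.eq_zero_or_pos r with h0 | h1
    · exfalso
      have hdvd : (β₁:ℤ) ∣ (α₁ * j : ℕ) := by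
        exact_mod_cast Nat.dvd_of_mod_eq_zero h0
      have hdvd2 : (β₁:ℤ) ∣ (j:ℤ) * σ := by
        have : (j:ℤ) * σ = (α₁ * j : ℕ) * β₀ - β₁ * (j * α₀) := by
          push_cast; linear_combination (-(j:ℤ)) * h
        rw [this]
        exact dvd_sub (hdvd.mul_right _) (Dvd.intro _ rfl)
      have hdvd3 : (β₁:ℤ) ∣ (j:ℤ) := by
        rcases hσ with rfl | rfl
        · simpa using hdvd2
        · simpa using hdvd2.neg_right
      have := Int.le_of_dvd (by exact_mod_cast hjpos) hdvd3
      omega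
    · exact h1
  -- bound on δ
  have hδabs : |(σ:ℚ) * j / (β₁ * β₀)| < 1 / β₁ := by
    have hσabs : |(σ:ℚ)| = 1 := by rcases hσ with rfl | rfl <;> simp
    rw [abs_div, abs_mul, hσabs, one_mul, abs_of_nonneg (by positivity : (0:ℚ) ≤ (j:ℚ)),
      abs_of_pos (mul_pos hβ₁Q hβ₀Q), div_lt_div_iff₀ (mul_pos hβ₁Q hβ₀Q) hβ₁Q]
    have hjQ : (j:ℚ) < β₀ := by
      exact_mod_cast hj.trans hβ
    calc (j:ℚ) * β₁ < β₀ * β₁ := by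
          exact mul_lt_mul_of_pos_right hjQ hβ₁Q
      _ = 1 * (β₁ * β₀) := by ring
  rw [Int.fract_eq_iff]
  have hrQ1 : (1:ℚ) ≤ r := by exact_mod_cast hr1
  have hrQ2 : (r:ℚ) ≤ β₁ - 1 := by
    have : (r:ℚ) + 1 ≤ β₁ := by exact_mod_cast hr2
    linarith
  have habs := abs_lt.mp hδabs
  refine ⟨?_, ?_, ⟨⌊(α₁ * j : ℚ) / β₁⌋, ?_⟩⟩
  · rw [hfr]
    have : 1 / (β₁:ℚ) ≤ r / β₁ := by
      apply div_le_div_of_nonneg_right hrQ1 hβ₁Q.le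
    linarith [habs.2]
  · rw [hfr]
    have : (r:ℚ) / β₁ ≤ (β₁ - 1) / β₁ := by
      apply div_le_div_of_nonneg_right hrQ2 hβ₁Q.le
    have h2 : ((β₁:ℚ) - 1) / β₁ = 1 - 1/β₁ := by field_simp
    linarith [habs.1]
  · rw [Int.fract]
    ring
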